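/- Every commutative ring embeds in a commutative clean ring. -/

import Mathlib

/-- Burgess–Raphael: every commutative ring embeds in a commutative clean ring
(every element is the sum of a unit and an idempotent). -/
theorem stmt_13 (R : Type u) [CommRing R] :
    ∃ (T : Type u) (_ : CommRing T),
      (∀ t : T, ∃ u e : T, IsUnit u ∧ IsIdempotentElem e ∧ t = u + e) ∧
      ∃ f : R →+* T, Function.Injective f := by
  classical
  refine ⟨∀ p : PrimeSpectrum R, Localization.AtPrime p.asIdeal, inferInstance, ?_, ?_⟩
  · intro t
    have hp : ∀ p : PrimeSpectrum R,
        IsUnit (if IsUnit (t p) then t p else t p - 1) := by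
      intro p
      by_cases h : IsUnit (t p)
      · simpa [h] using h
      · simp only [h, if_false]
        rcases IsLocalRing.isUnit_or_isUnit_one_sub_self (t p) with h' | h'
        · exact absurd h' h
        · simpa using h'.neg
    refine ⟨fun p => if IsUnit (t p) then t p else t p - 1,
      fun p => if IsUnit (t p) then 0 else 1, ?_, ?_, ?_⟩
    · refine IsUnit.of_mul_eq_one (fun p => ((hp p).unit⁻¹ : _)) (funext fun p => ?_)
      have := (hp p).unit.mul_inv
      simpa [IsUnit.unit_spec] using this
    · funext p
      by_cases h : IsUnit (t p) <;> simp [IsIdempotentElem, Pi.mul_apply, h]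
    · funext p
      by_cases h : IsUnit (t p) <;> simp [h]
  · refine ⟨Pi.ringHom (fun p : PrimeSpectrum R =>
      algebraMap R (Localization.AtPrime p.asIdeal)), ?_⟩
    rw [injective_iff_map_eq_zero]
    intro x hx
    by_contra hx0
    set J : Ideal R := LinearMap.ker (LinearMap.toSpanSingleton R R x) with hJ
    have hJne : J ≠ ⊤ := by
      intro h
      have : (1 : R) ∈ J := h ▸ Submodule.mem_top
      simp [hJ, LinearMap.mem_ker, LinearMap.toSpanSingleton_apply] at this
      exact hx0 this
    obtain ⟨p, hpmax, hJp⟩ := Ideal.exists_le_maximal J hJne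
    haveI := hpmax.isPrime
    have h0'' := congrFun hx (⟨p, hpmax.isPrime⟩ : PrimeSpectrum R)
    have h0' : algebraMap R (Localization.AtPrime p) x = 0 := h0''
    rw [IsLocalization.map_eq_zero_iff p.primeCompl] at h0'
    obtain ⟨m, hm⟩ := h0'
    have : (m : R) ∈ J := by
      simp only [hJ, LinearMap.mem_ker, LinearMap.toSpanSingleton_apply, smul_eq_mul]
      exact hm
    exact m.2 (hJp this)
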